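/- Let f : ℝ^(m×n) → ℝ be convex differentiable, k ≥ 2, L_k and L₂ as above with d = min_i d_i. If L₂ has a spurious local minimum (a local minimum that is not global), then L_k also has a spurious local minimum. -/

import Mathlib

attribute [local instance] Matrix.frobeniusNormedAddCommGroup Matrix.frobeniusNormedSpace

/-- Product `M (b-1) * ⋯ * M a` of a chain of matrices (identity when `b = a`,
junk value `0` when `b < a`). -/
def chainProd (d : ℕ → ℕ) (M : ∀ i : ℕ, Matrix (Fin (d (i + 1))) (Fin (d i)) ℝ)
    (a : ℕ) : (b : ℕ) → Matrix (Fin (d b)) (Fin (d a)) ℝ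
  | 0 => if h : 0 = a then by rw [← h]; exact 1 else 0
  | (b + 1) => if h : b + 1 = a then by rw [← h]; exact 1
      else M b * chainProd d M a b

/-- Extend a `Fin k`-indexed tuple of layer matrices to an `ℕ`-indexed one (by `0`). -/
def ext (d : ℕ → ℕ) (k : ℕ)
    (N : ∀ i : Fin k, Matrix (Fin (d (i.1 + 1))) (Fin (d i.1)) ℝ) :
    ∀ i : ℕ, Matrix (Fin (d (i + 1))) (Fin (d i)) ℝ :=
  fun i => if h : i < k then N ⟨i, h⟩ else 0
noncomputable section
open Matrix Set

def inc (b a : ℕ) : Matrix (Fin b) (Fin a) ℝ :=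
  Matrix.of fun r c => if (r : ℕ) = (c : ℕ) then 1 else 0

lemma inc_self (a : ℕ) : inc a a = 1 := by
  ext r s
  simp [inc, Matrix.one_apply, Fin.ext_iff]

lemma inc_mul_inc {c b a : ℕ} (h : min c a ≤ b) : inc c b * inc b a = inc c a := by
  ext r s
  rw [Matrix.mul_apply]
  by_cases hrs : (r : ℕ) = (s : ℕ)
  · have hrb : (r : ℕ) < b := lt_of_lt_of_le (lt_min r.isLt (hrs ▸ s.isLt)) h
    rw [Finset.sum_eq_single (⟨(r : ℕ), hrb⟩ : Fin b)]
    · simp [inc, hrs]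
    · intro j _ hj
      have h1 : (r : ℕ) ≠ (j : ℕ) := by
        intro h1
        exact hj (by ext; exact h1.symm)
      simp [inc, h1]
    · intro hmem; exact absurd (Finset.mem_univ _) hmem
  · have hz : ∀ j : Fin b, inc c b r j * inc b a j s = 0 := by
      intro j
      rcases eq_or_ne (r : ℕ) (j : ℕ) with h1 | h1
      · have : (j : ℕ) ≠ (s : ℕ) := fun hh => hrs (h1.trans hh)
        simp [inc, this]
      · simp [inc, h1]
    rw [Finset.sum_eq_zero fun j _ => hz j]
    simp [inc, hrs]

lemma chainProd_same (d : ℕ → ℕ) (M : ∀ i : ℕ, Matrix (Fin (d (i + 1))) (Fin (d i)) ℝ)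
    (a : ℕ) : chainProd d M a a = 1 := by
  cases a <;> simp [chainProd]

lemma chainProd_succ (d : ℕ → ℕ) (M : ∀ i : ℕ, Matrix (Fin (d (i + 1))) (Fin (d i)) ℝ)
    (a b : ℕ) (h : b + 1 ≠ a) :
    chainProd d M a (b + 1) = M b * chainProd d M a b := by
  simp [chainProd, h]

lemma chainProd_split (d : ℕ → ℕ) (M : ∀ i : ℕ, Matrix (Fin (d (i + 1))) (Fin (d i)) ℝ)
    {a b c : ℕ} (hab : a ≤ b) (hbc : b ≤ c) :
    chainProd d M a c = chainProd d M b c * chainProd d M a b := by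
  induction c, hbc using Nat.le_induction with
  | base => rw [chainProd_same, Matrix.one_mul]
  | succ c hbc ih =>
      rw [chainProd_succ d M a c (by omega), chainProd_succ d M b c (by omega), ih,
        Matrix.mul_assoc]

lemma transfer_localmin {α β : Type*} [TopologicalSpace α] [TopologicalSpace β]
    (F : α → ℝ) (G : β → ℝ) (ψ : α → β) (a : α)
    (hψ : ContinuousAt ψ a) (hFG : ∀ x, F x = G (ψ x))
    (h : IsLocalMin G (ψ a)) : IsLocalMin F a := by
  have h2 := hψ.tendsto.eventually h
  filter_upwards [h2] with x hx
  rw [hFG, hFG]; exact hx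

lemma convex_fderiv_zero_min {E : Type*} [NormedAddCommGroup E] [NormedSpace ℝ E]
    (f : E → ℝ) (hconv : ConvexOn ℝ Set.univ f) (hdiff : Differentiable ℝ f)
    (x : E) (hG : fderiv ℝ f x = 0) (y : E) : f x ≤ f y := by
  set g : ℝ → ℝ := fun t => f (x + t • (y - x)) with hgdef
  have hg : HasDerivAt g 0 0 := by
    have h1 : HasDerivAt (fun t : ℝ => x + t • (y - x)) (y - x) 0 := by
      simpa using ((hasDerivAt_id (0 : ℝ)).smul_const (y - x)).const_add x
    have h2 : HasFDerivAt f (fderiv ℝ f x) (x + (0 : ℝ) • (y - x)) := by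
      simpa using (hdiff x).hasFDerivAt
    have := h2.comp_hasDerivAt 0 h1
    have h4 : HasDerivAt (f ∘ fun t : ℝ => x + t • (y - x)) 0 0 := by simpa [hG] using this
    exact h4
  have key : ∀ᶠ t in nhdsWithin (0 : ℝ) (Set.Ioi 0), slope g 0 t ≤ f y - f x := by
    filter_upwards [Ioc_mem_nhdsGT_of_mem (Set.mem_Ico.mpr ⟨le_rfl, zero_lt_one⟩)] with t ht
    have hcomb := hconv.2 (Set.mem_univ x) (Set.mem_univ y)
      (by linarith [ht.2] : (0:ℝ) ≤ 1 - t) (le_of_lt ht.1) (by ring)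
    have hx2 : (1 - t) • x + t • y = x + t • (y - x) := by
      rw [smul_sub, sub_smul, one_smul]; abel
    rw [hx2] at hcomb
    have hg0 : g 0 = f x := by simp [hgdef]
    rw [slope_def_field]
    rw [div_le_iff₀ (by linarith [ht.1] : (0:ℝ) < t - 0)]
    have : g t ≤ (1 - t) * f x + t * f y := hcomb
    rw [hg0]
    nlinarith
  have htend : Filter.Tendsto (slope g 0) (nhdsWithin (0:ℝ) (Set.Ioi 0)) (nhds 0) :=
    (hasDerivAt_iff_tendsto_slope.mp hg).mono_left
      (nhdsWithin_mono _ fun t ht => ne_of_gt ht)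
  have : (0 : ℝ) ≤ f y - f x := le_of_tendsto htend key
  have hg0 : g 0 = f x := by simp [hgdef]
  linarith

def mulLeftCLM {m e n : ℕ} (A : Matrix (Fin m) (Fin e) ℝ) :
    Matrix (Fin e) (Fin n) ℝ →L[ℝ] Matrix (Fin m) (Fin n) ℝ :=
  LinearMap.toContinuousLinearMap
    { toFun := fun H => A * H
      map_add' := fun x y => Matrix.mul_add A x y
      map_smul' := fun c x => by simp [Matrix.mul_smul] }

def mulRightCLM {m e n : ℕ} (B : Matrix (Fin e) (Fin n) ℝ) :
    Matrix (Fin m) (Fin e) ℝ →L[ℝ] Matrix (Fin m) (Fin n) ℝ :=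
  LinearMap.toContinuousLinearMap
    { toFun := fun H => H * B
      map_add' := fun x y => Matrix.add_mul x y B
      map_smul' := fun c x => by simp [Matrix.smul_mul] }

lemma partial_right {m e n : ℕ} (f : Matrix (Fin m) (Fin n) ℝ → ℝ)
    (hdiff : Differentiable ℝ f)
    (A : Matrix (Fin m) (Fin e) ℝ) (B : Matrix (Fin e) (Fin n) ℝ)
    (h : IsLocalMin (fun q : Matrix (Fin m) (Fin e) ℝ × Matrix (Fin e) (Fin n) ℝ =>
      f (q.1 * q.2)) (A, B)) (H : Matrix (Fin e) (Fin n) ℝ) :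
    fderiv ℝ f (A * B) (A * H) = 0 := by
  have hloc : IsLocalMin (fun H' => f (A * H')) B := by
    apply transfer_localmin _ _ (fun H' => (A, H')) B
      ((continuous_const.prodMk continuous_id).continuousAt) (fun _ => rfl) h
  have hF : HasFDerivAt (fun H' => f (A * H'))
      ((fderiv ℝ f (A * B)).comp (mulLeftCLM A)) B :=
    ((hdiff (A * B)).hasFDerivAt).comp B (mulLeftCLM A).hasFDerivAt
  have hz := hloc.hasFDerivAt_eq_zero hF
  have := DFunLike.congr_fun hz H
  rw [ContinuousLinearMap.zero_apply] at this
  exact this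

lemma partial_left {m e n : ℕ} (f : Matrix (Fin m) (Fin n) ℝ → ℝ)
    (hdiff : Differentiable ℝ f)
    (A : Matrix (Fin m) (Fin e) ℝ) (B : Matrix (Fin e) (Fin n) ℝ)
    (h : IsLocalMin (fun q : Matrix (Fin m) (Fin e) ℝ × Matrix (Fin e) (Fin n) ℝ =>
      f (q.1 * q.2)) (A, B)) (H : Matrix (Fin m) (Fin e) ℝ) :
    fderiv ℝ f (A * B) (H * B) = 0 := by
  have hloc : IsLocalMin (fun H' => f (H' * B)) A := by
    apply transfer_localmin _ _ (fun H' => (H', B)) A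
      ((continuous_id.prodMk continuous_const).continuousAt) (fun _ => rfl) h
  have hF : HasFDerivAt (fun H' => f (H' * B))
      ((fderiv ℝ f (A * B)).comp (mulRightCLM B)) A :=
    ((hdiff (A * B)).hasFDerivAt).comp A (mulRightCLM B).hasFDerivAt
  have hz := hloc.hasFDerivAt_eq_zero hF
  have := DFunLike.congr_fun hz H
  rw [ContinuousLinearMap.zero_apply] at this
  exact this

-- perturbed local min (A + W, B) when W * B = 0 and W small
lemma perturbA {m e n : ℕ} (f : Matrix (Fin m) (Fin n) ℝ → ℝ)
    (hdiff : Differentiable ℝ f)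
    (A : Matrix (Fin m) (Fin e) ℝ) (B : Matrix (Fin e) (Fin n) ℝ)
    (h : IsLocalMin (fun q : Matrix (Fin m) (Fin e) ℝ × Matrix (Fin e) (Fin n) ℝ =>
      f (q.1 * q.2)) (A, B))
    (W : Matrix (Fin m) (Fin e) ℝ) (hW : W * B = 0) (H : Matrix (Fin e) (Fin n) ℝ) :
    fderiv ℝ f (A * B) (W * H) = 0 := by
  obtain ⟨ε, εpos, hball⟩ := Metric.eventually_nhds_iff.mp h
  set s : ℝ := ε / (2 * (‖W‖ + 1)) with hs
  have hWn : (0:ℝ) < ‖W‖ + 1 := by positivity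
  have hspos : 0 < s := by positivity
  have hsW : ‖s • W‖ < ε := by
    rw [norm_smul, Real.norm_eq_abs, abs_of_pos hspos]
    rw [hs, div_mul_eq_mul_div, div_lt_iff₀ (by positivity)]
    nlinarith [norm_nonneg W]
  have hmin' : IsLocalMin (fun q : Matrix (Fin m) (Fin e) ℝ × Matrix (Fin e) (Fin n) ℝ =>
      f (q.1 * q.2)) (A + s • W, B) := by
    rw [IsLocalMin, IsMinFilter]; apply Metric.eventually_nhds_iff.mpr
    refine ⟨ε - ‖s • W‖, by linarith, fun q hq => ?_⟩
    have hd : dist q (A, B) < ε := by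
      have h1 : dist q (A, B) ≤ dist q (A + s • W, B) + dist (A + s • W, B) (A, B) :=
        dist_triangle _ _ _
      have h2 : dist ((A + s • W, B) : Matrix (Fin m) (Fin e) ℝ × Matrix (Fin e) (Fin n) ℝ)
          (A, B) = ‖s • W‖ := by
        rw [Prod.dist_eq]
        simp [dist_eq_norm]
      rw [h2] at h1; linarith
    have hval : (A + s • W) * B = A * B := by
      rw [Matrix.add_mul, Matrix.smul_mul, hW, smul_zero, add_zero]
    have := hball hd
    simpa [hval] using this
  have h1 := partial_right f hdiff (A + s • W) B hmin' H
  have h2 := partial_right f hdiff A B h H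
  have hval : (A + s • W) * B = A * B := by
    rw [Matrix.add_mul, Matrix.smul_mul, hW, smul_zero, add_zero]
  rw [hval] at h1
  have hexp : (A + s • W) * H = A * H + s • (W * H) := by
    rw [Matrix.add_mul, Matrix.smul_mul]
  rw [hexp, map_add, h2, zero_add, ContinuousLinearMap.map_smul, smul_eq_mul] at h1
  have := mul_eq_zero.mp h1
  rcases this with h | h
  · exact absurd h (ne_of_gt hspos)
  · exact h

lemma perturbB {m e n : ℕ} (f : Matrix (Fin m) (Fin n) ℝ → ℝ)
    (hdiff : Differentiable ℝ f)
    (A : Matrix (Fin m) (Fin e) ℝ) (B : Matrix (Fin e) (Fin n) ℝ)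
    (h : IsLocalMin (fun q : Matrix (Fin m) (Fin e) ℝ × Matrix (Fin e) (Fin n) ℝ =>
      f (q.1 * q.2)) (A, B))
    (V : Matrix (Fin e) (Fin n) ℝ) (hV : A * V = 0) (H : Matrix (Fin m) (Fin e) ℝ) :
    fderiv ℝ f (A * B) (H * V) = 0 := by
  obtain ⟨ε, εpos, hball⟩ := Metric.eventually_nhds_iff.mp h
  set s : ℝ := ε / (2 * (‖V‖ + 1)) with hs
  have hVn : (0:ℝ) < ‖V‖ + 1 := by positivity
  have hspos : 0 < s := by positivity
  have hsV : ‖s • V‖ < ε := by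
    rw [norm_smul, Real.norm_eq_abs, abs_of_pos hspos]
    rw [hs, div_mul_eq_mul_div, div_lt_iff₀ (by positivity)]
    nlinarith [norm_nonneg V]
  have hmin' : IsLocalMin (fun q : Matrix (Fin m) (Fin e) ℝ × Matrix (Fin e) (Fin n) ℝ =>
      f (q.1 * q.2)) (A, B + s • V) := by
    rw [IsLocalMin, IsMinFilter]; apply Metric.eventually_nhds_iff.mpr
    refine ⟨ε - ‖s • V‖, by linarith, fun q hq => ?_⟩
    have hd : dist q (A, B) < ε := by
      have h1 : dist q (A, B) ≤ dist q (A, B + s • V) + dist (A, B + s • V) (A, B) :=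
        dist_triangle _ _ _
      have h2 : dist ((A, B + s • V) : Matrix (Fin m) (Fin e) ℝ × Matrix (Fin e) (Fin n) ℝ)
          (A, B) = ‖s • V‖ := by
        rw [Prod.dist_eq]
        simp [dist_eq_norm]
      rw [h2] at h1; linarith
    have hval : A * (B + s • V) = A * B := by
      rw [Matrix.mul_add, Matrix.mul_smul, hV, smul_zero, add_zero]
    have := hball hd
    simpa [hval] using this
  have h1 := partial_left f hdiff A (B + s • V) hmin' H
  have h2 := partial_left f hdiff A B h H
  have hval : A * (B + s • V) = A * B := by
    rw [Matrix.mul_add, Matrix.mul_smul, hV, smul_zero, add_zero]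
  rw [hval] at h1
  have hexp : H * (B + s • V) = H * B + s • (H * V) := by
    rw [Matrix.mul_add, Matrix.mul_smul]
  rw [hexp, map_add, h2, zero_add, ContinuousLinearMap.map_smul, smul_eq_mul] at h1
  rcases mul_eq_zero.mp h1 with h | h
  · exact absurd h (ne_of_gt hspos)
  · exact h

lemma vecMulVec_mul {m e n : ℕ} (u : Fin m → ℝ) (v : Fin e → ℝ)
    (B : Matrix (Fin e) (Fin n) ℝ) :
    Matrix.vecMulVec u v * B = Matrix.vecMulVec u (Matrix.vecMul v B) := by
  ext i j
  simp [Matrix.mul_apply, Matrix.vecMulVec_apply, Matrix.vecMul, dotProduct,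
    Finset.mul_sum, mul_assoc]

lemma mul_vecMulVec {m e n : ℕ} (A : Matrix (Fin m) (Fin e) ℝ) (v : Fin e → ℝ)
    (w : Fin n → ℝ) :
    A * Matrix.vecMulVec v w = Matrix.vecMulVec (A.mulVec v) w := by
  ext i j
  simp [Matrix.mul_apply, Matrix.vecMulVec_apply, Matrix.mulVec, dotProduct,
    Finset.sum_mul, mul_assoc]

lemma matrix_eq_sum_rankOne {m n : ℕ} (Y : Matrix (Fin m) (Fin n) ℝ) :
    Y = ∑ i, Matrix.vecMulVec (Pi.single i 1) (Y i) := by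
  ext r j
  rw [Matrix.sum_apply]
  simp [Matrix.vecMulVec_apply, Pi.single_apply]

-- G vanishes on all matrices if it vanishes on all rank-one matrices
lemma clm_zero_of_rankOne {m n : ℕ}
    (G : Matrix (Fin m) (Fin n) ℝ →L[ℝ] ℝ)
    (h : ∀ (u : Fin m → ℝ) (c : Fin n → ℝ), G (Matrix.vecMulVec u c) = 0)
    (Y : Matrix (Fin m) (Fin n) ℝ) : G Y = 0 := by
  rw [matrix_eq_sum_rankOne Y, map_sum]
  exact Finset.sum_eq_zero fun i _ => h _ _

-- left-null vector of B kills the gradient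
lemma grad_zero_of_leftnull {m e n : ℕ} (f : Matrix (Fin m) (Fin n) ℝ → ℝ)
    (hdiff : Differentiable ℝ f)
    (A : Matrix (Fin m) (Fin e) ℝ) (B : Matrix (Fin e) (Fin n) ℝ)
    (h : IsLocalMin (fun q : Matrix (Fin m) (Fin e) ℝ × Matrix (Fin e) (Fin n) ℝ =>
      f (q.1 * q.2)) (A, B))
    (v : Fin e → ℝ) (hv : v ≠ 0) (hvB : Matrix.vecMul v B = 0) :
    fderiv ℝ f (A * B) = 0 := by
  obtain ⟨s, hs⟩ : ∃ s, v s ≠ 0 := by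
    by_contra hc
    push_neg at hc
    exact hv (funext hc)
  apply ContinuousLinearMap.ext
  intro Y
  rw [ContinuousLinearMap.zero_apply]
  apply clm_zero_of_rankOne _ _ Y
  intro u c
  set H : Matrix (Fin e) (Fin n) ℝ :=
    Matrix.of fun a j => if a = s then (v s)⁻¹ * c j else 0 with hH
  have hvH : Matrix.vecMul v H = c := by
    funext j
    simp only [Matrix.vecMul, dotProduct, hH, Matrix.of_apply]
    rw [Finset.sum_eq_single s]
    · rw [if_pos rfl, ← mul_assoc, mul_inv_cancel₀ hs, one_mul]
    · intro b _ hb; simp [hb]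
    · intro hmem; exact absurd (Finset.mem_univ _) hmem
  have hW : Matrix.vecMulVec u v * B = 0 := by
    rw [_root_.vecMulVec_mul, hvB]
    ext i j; simp [Matrix.vecMulVec_apply]
  have := perturbA f hdiff A B h (Matrix.vecMulVec u v) hW H
  rwa [_root_.vecMulVec_mul, hvH] at this

lemma grad_zero_of_rightnull {m e n : ℕ} (f : Matrix (Fin m) (Fin n) ℝ → ℝ)
    (hdiff : Differentiable ℝ f)
    (A : Matrix (Fin m) (Fin e) ℝ) (B : Matrix (Fin e) (Fin n) ℝ)
    (h : IsLocalMin (fun q : Matrix (Fin m) (Fin e) ℝ × Matrix (Fin e) (Fin n) ℝ =>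
      f (q.1 * q.2)) (A, B))
    (v : Fin e → ℝ) (hv : v ≠ 0) (hAv : A.mulVec v = 0) :
    fderiv ℝ f (A * B) = 0 := by
  obtain ⟨s, hs⟩ : ∃ s, v s ≠ 0 := by
    by_contra hc
    push_neg at hc
    exact hv (funext hc)
  apply ContinuousLinearMap.ext
  intro Y
  rw [ContinuousLinearMap.zero_apply]
  apply clm_zero_of_rankOne _ _ Y
  intro u c
  set H : Matrix (Fin m) (Fin e) ℝ :=
    Matrix.of fun i a => if a = s then (v s)⁻¹ * u i else 0 with hH
  have hHv : H.mulVec v = u := by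
    funext i
    simp only [Matrix.mulVec, dotProduct, hH, Matrix.of_apply]
    rw [Finset.sum_eq_single s]
    · rw [if_pos rfl, mul_right_comm, inv_mul_cancel₀ hs, one_mul]
    · intro b _ hb; simp [hb]
    · intro hmem; exact absurd (Finset.mem_univ _) hmem
  have hV : A * Matrix.vecMulVec v c = 0 := by
    rw [_root_.mul_vecMulVec, hAv]
    ext i j; simp [Matrix.vecMulVec_apply]
  have := perturbB f hdiff A B h (Matrix.vecMulVec v c) hV H
  rwa [_root_.mul_vecMulVec, hHv] at this

-- the padded layers
def Pmat (d : ℕ → ℕ) (k e : ℕ) (A : Matrix (Fin (d k)) (Fin e) ℝ) (j : ℕ) :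
    Matrix (Fin (d j)) (Fin e) ℝ :=
  if j = k then inc (d j) (d k) * A else inc (d j) e

def Rmat (d : ℕ → ℕ) (e : ℕ) (B : Matrix (Fin e) (Fin (d 0)) ℝ) (i : ℕ) :
    Matrix (Fin e) (Fin (d i)) ℝ :=
  if i = 0 then B * inc (d 0) (d i) else inc e (d i)

def layers (d : ℕ → ℕ) (k e : ℕ) (A : Matrix (Fin (d k)) (Fin e) ℝ)
    (B : Matrix (Fin e) (Fin (d 0)) ℝ) :
    ∀ i : Fin k, Matrix (Fin (d (i.1 + 1))) (Fin (d i.1)) ℝ :=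
  fun i => Pmat d k e A (i.1 + 1) * Rmat d e B i.1

lemma prod_layers (d : ℕ → ℕ) (k e : ℕ) (A : Matrix (Fin (d k)) (Fin e) ℝ)
    (B : Matrix (Fin e) (Fin (d 0)) ℝ) (he2 : ∀ i ≤ k, e ≤ d i)
    {a b : ℕ} (hab : a < b) (hbk : b ≤ k) :
    chainProd d (ext d k (layers d k e A B)) a b = Pmat d k e A b * Rmat d e B a := by
  induction b, hab using Nat.le_induction with
  | base =>
      rw [chainProd_succ d _ a a (by omega), chainProd_same, Matrix.mul_one]
      have ha : a < k := by omega
      simp only [_root_.ext, dif_pos ha]; rfl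
  | succ b hab ih =>
      have hbk' : b ≤ k := by omega
      rw [chainProd_succ d _ a b (by omega), ih hbk']
      have hb : b < k := by omega
      simp only [_root_.ext, dif_pos hb]
      show Pmat d k e A (b+1) * Rmat d e B b * (Pmat d k e A b * Rmat d e B a) = Pmat d k e A (b+1) * Rmat d e B a
      have h1 : Rmat d e B b = inc e (d b) := by
        unfold Rmat; rw [if_neg (by omega)]
      have h2 : Pmat d k e A b = inc (d b) e := by
        unfold Pmat; rw [if_neg (by omega)]
      rw [Matrix.mul_assoc, ← Matrix.mul_assoc (Rmat d e B b), h1, h2,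
        inc_mul_inc (by simp [he2 b hbk']), inc_self, Matrix.one_mul]

lemma prod_layers_full (d : ℕ → ℕ) (k e : ℕ) (A : Matrix (Fin (d k)) (Fin e) ℝ)
    (B : Matrix (Fin e) (Fin (d 0)) ℝ) (he2 : ∀ i ≤ k, e ≤ d i) (hk : 0 < k) :
    chainProd d (ext d k (layers d k e A B)) 0 k = A * B := by
  rw [prod_layers d k e A B he2 hk le_rfl]
  unfold Pmat Rmat
  rw [if_pos rfl, if_pos rfl, inc_self, inc_self, Matrix.one_mul, Matrix.mul_one]

lemma continuous_chainProd (d : ℕ → ℕ) (k a : ℕ) :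
    ∀ b, Continuous fun (N : ∀ i : Fin k, Matrix (Fin (d (i.1 + 1))) (Fin (d i.1)) ℝ) =>
      chainProd d (ext d k N) a b := by
  intro b
  induction b with
  | zero =>
      by_cases h : 0 = a
      · simp only [chainProd, dif_pos h]; exact continuous_const
      · simp only [chainProd, dif_neg h]; exact continuous_const
  | succ b ih =>
      by_cases h : b + 1 = a
      · simp only [chainProd, dif_pos h]; exact continuous_const
      · have : (fun (N : ∀ i : Fin k, Matrix (Fin (d (i.1 + 1))) (Fin (d i.1)) ℝ) =>
            chainProd d (ext d k N) a (b + 1))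
            = fun N => (ext d k N b) * chainProd d (ext d k N) a b := by
          funext N; rw [chainProd_succ d _ a b h]
        rw [this]
        apply Continuous.matrix_mul _ ih
        by_cases hb : b < k
        · simp only [_root_.ext, dif_pos hb]
          exact continuous_apply _
        · simp only [_root_.ext, dif_neg hb]
          exact continuous_const

theorem stmt_12 (d : ℕ → ℕ) (k : ℕ) (hk : 2 ≤ k)
    (f : Matrix (Fin (d k)) (Fin (d 0)) ℝ → ℝ)
    (hconv : ConvexOn ℝ Set.univ f) (hdiff : Differentiable ℝ f)
    (e : ℕ) (he1 : ∃ i ≤ k, d i = e) (he2 : ∀ i ≤ k, e ≤ d i)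
    (h2 : ∃ p : Matrix (Fin (d k)) (Fin e) ℝ × Matrix (Fin e) (Fin (d 0)) ℝ,
      IsLocalMin (fun q : Matrix (Fin (d k)) (Fin e) ℝ × Matrix (Fin e) (Fin (d 0)) ℝ =>
        f (q.1 * q.2)) p ∧
      ∃ q : Matrix (Fin (d k)) (Fin e) ℝ × Matrix (Fin e) (Fin (d 0)) ℝ,
        f (q.1 * q.2) < f (p.1 * p.2)) :
    ∃ M : ∀ i : Fin k, Matrix (Fin (d (i.1 + 1))) (Fin (d i.1)) ℝ,
      IsLocalMin (fun N => f (chainProd d (ext d k N) 0 k)) M ∧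
      ∃ N : ∀ i : Fin k, Matrix (Fin (d (i.1 + 1))) (Fin (d i.1)) ℝ,
        f (chainProd d (ext d k N) 0 k) < f (chainProd d (ext d k M) 0 k) := by
  obtain ⟨p, hp, q, hq⟩ := h2
  have hkpos : 0 < k := by omega
  set Mt := layers d k e p.1 p.2 with hMt
  have hMprod : chainProd d (ext d k Mt) 0 k = p.1 * p.2 :=
    prod_layers_full d k e p.1 p.2 he2 hkpos
  refine ⟨Mt, ?_, layers d k e q.1 q.2, ?_⟩
  swap
  · rw [hMprod, prod_layers_full d k e q.1 q.2 he2 hkpos]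
    exact hq
  by_cases hmid : ∃ t, 0 < t ∧ t < k ∧ d t = e
  · -- bottleneck at an intermediate layer
    obtain ⟨t, ht0, htk, hte⟩ := hmid
    set ψ : (∀ i : Fin k, Matrix (Fin (d (i.1 + 1))) (Fin (d i.1)) ℝ) →
        Matrix (Fin (d k)) (Fin e) ℝ × Matrix (Fin e) (Fin (d 0)) ℝ :=
      fun N => (chainProd d (ext d k N) t k * inc (d t) e,
                inc e (d t) * chainProd d (ext d k N) 0 t) with hψ
    have hcont : ContinuousAt ψ Mt := by
      apply Continuous.continuousAt
      exact ((continuous_chainProd d k t k).matrix_mul continuous_const).prodMk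
        (continuous_const.matrix_mul (continuous_chainProd d k 0 t))
    have hFG : ∀ N, f (chainProd d (ext d k N) 0 k) = f ((ψ N).1 * (ψ N).2) := by
      intro N
      congr 1
      rw [hψ]
      show chainProd d (ext d k N) 0 k
        = chainProd d (ext d k N) t k * inc (d t) e
          * (inc e (d t) * chainProd d (ext d k N) 0 t)
      rw [Matrix.mul_assoc, ← Matrix.mul_assoc (inc (d t) e),
        inc_mul_inc (by simp [hte]), inc_self, Matrix.one_mul,
        ← chainProd_split d _ (Nat.zero_le t) (le_of_lt htk)]
    have hψM : ψ Mt = p := by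
      have h1 : chainProd d (ext d k Mt) t k = p.1 * inc e (d t) := by
        rw [hMt, prod_layers d k e p.1 p.2 he2 htk le_rfl]
        unfold Pmat Rmat
        rw [if_pos rfl, if_neg (by omega), inc_self, Matrix.one_mul]
      have h2 : chainProd d (ext d k Mt) 0 t = inc (d t) e * p.2 := by
        rw [hMt, prod_layers d k e p.1 p.2 he2 ht0 (le_of_lt htk)]
        unfold Pmat Rmat
        rw [if_neg (by omega), if_pos rfl, inc_self, Matrix.mul_one]
      rw [hψ]
      apply Prod.ext_iff.mpr
      constructor
      · show chainProd d (ext d k Mt) t k * inc (d t) e = p.1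
        rw [h1, Matrix.mul_assoc, inc_mul_inc (by simp [he2 t (le_of_lt htk)]),
          inc_self, Matrix.mul_one]
      · show inc e (d t) * chainProd d (ext d k Mt) 0 t = p.2
        rw [h2, ← Matrix.mul_assoc, inc_mul_inc (by simp [he2 t (le_of_lt htk)]),
          inc_self, Matrix.one_mul]
    exact transfer_localmin _ _ ψ Mt hcont hFG (by rw [hψM]; exact hp)
  · -- bottleneck only at the boundary
    obtain ⟨t, htk, hte⟩ := he1
    have hcases : d 0 = e ∨ d k = e := by
      rcases Nat.eq_zero_or_pos t with h | h
      · left; rw [← h]; exact hte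
      · rcases eq_or_lt_of_le htk with h' | h'
        · right; rw [← h']; exact hte
        · exact absurd ⟨t, h, h', hte⟩ hmid
    have hglobal_contra : ¬ (fderiv ℝ f (p.1 * p.2) = 0) := by
      intro hG
      exact absurd (convex_fderiv_zero_min f hconv hdiff _ hG (q.1 * q.2)) (not_le.mpr hq)
    rcases hcases with h0 | hklast
    · -- d 0 = e : B is (essentially) square, must be invertible
      set Bsq : Matrix (Fin e) (Fin e) ℝ := p.2 * inc (d 0) e with hBsq
      have hBeq : p.2 = Bsq * inc e (d 0) := by
        rw [hBsq, Matrix.mul_assoc, inc_mul_inc (by simp [h0]), inc_self, Matrix.mul_one]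
      by_cases hdet : Bsq.det = 0
      · obtain ⟨v, hv, hvB⟩ := (Matrix.exists_vecMul_eq_zero_iff).mpr hdet
        exfalso
        apply hglobal_contra
        apply grad_zero_of_leftnull f hdiff p.1 p.2 (by simpa using hp) v hv
        rw [hBeq, ← Matrix.vecMul_vecMul, hvB, Matrix.zero_vecMul]
      · have hunit : IsUnit Bsq.det := isUnit_iff_ne_zero.mpr hdet
        set ψ : (∀ i : Fin k, Matrix (Fin (d (i.1 + 1))) (Fin (d i.1)) ℝ) →
            Matrix (Fin (d k)) (Fin e) ℝ × Matrix (Fin e) (Fin (d 0)) ℝ :=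
          fun N => (chainProd d (ext d k N) 0 k * inc (d 0) e * Bsq⁻¹, p.2) with hψ
        have hcont : ContinuousAt ψ Mt := by
          apply Continuous.continuousAt
          exact (((continuous_chainProd d k 0 k).matrix_mul continuous_const).matrix_mul
            continuous_const).prodMk continuous_const
        have hFG : ∀ N, f (chainProd d (ext d k N) 0 k) = f ((ψ N).1 * (ψ N).2) := by
          intro N
          congr 1
          show chainProd d (ext d k N) 0 k
            = chainProd d (ext d k N) 0 k * inc (d 0) e * Bsq⁻¹ * p.2
          conv_rhs => rw [hBeq]
          rw [Matrix.mul_assoc _ Bsq⁻¹ _, ← Matrix.mul_assoc Bsq⁻¹,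
            Matrix.nonsing_inv_mul _ hunit, Matrix.one_mul, Matrix.mul_assoc,
            inc_mul_inc (by simp [h0]), inc_self, Matrix.mul_one]
        have hψM : ψ Mt = p := by
          rw [hψ]
          apply Prod.ext_iff.mpr
          refine ⟨?_, rfl⟩
          show chainProd d (ext d k Mt) 0 k * inc (d 0) e * Bsq⁻¹ = p.1
          rw [hMprod, Matrix.mul_assoc p.1 p.2 _, ← hBsq, Matrix.mul_assoc,
            Matrix.mul_nonsing_inv _ hunit, Matrix.mul_one]
        exact transfer_localmin _ _ ψ Mt hcont hFG (by rw [hψM]; exact hp)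
    · -- d k = e : A is (essentially) square, must be invertible
      set Asq : Matrix (Fin e) (Fin e) ℝ := inc e (d k) * p.1 with hAsq
      have hAeq : p.1 = inc (d k) e * Asq := by
        rw [hAsq, ← Matrix.mul_assoc, inc_mul_inc (by simp [hklast]), inc_self,
          Matrix.one_mul]
      by_cases hdet : Asq.det = 0
      · obtain ⟨v, hv, hAv⟩ := (Matrix.exists_mulVec_eq_zero_iff).mpr hdet
        exfalso
        apply hglobal_contra
        apply grad_zero_of_rightnull f hdiff p.1 p.2 (by simpa using hp) v hv
        rw [hAeq, ← Matrix.mulVec_mulVec, hAv, Matrix.mulVec_zero]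
      · have hunit : IsUnit Asq.det := isUnit_iff_ne_zero.mpr hdet
        set ψ : (∀ i : Fin k, Matrix (Fin (d (i.1 + 1))) (Fin (d i.1)) ℝ) →
            Matrix (Fin (d k)) (Fin e) ℝ × Matrix (Fin e) (Fin (d 0)) ℝ :=
          fun N => (p.1, Asq⁻¹ * (inc e (d k) * chainProd d (ext d k N) 0 k)) with hψ
        have hcont : ContinuousAt ψ Mt := by
          apply Continuous.continuousAt
          exact continuous_const.prodMk (continuous_const.matrix_mul
            (continuous_const.matrix_mul (continuous_chainProd d k 0 k)))
        have hFG : ∀ N, f (chainProd d (ext d k N) 0 k) = f ((ψ N).1 * (ψ N).2) := by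
          intro N
          congr 1
          show chainProd d (ext d k N) 0 k
            = p.1 * (Asq⁻¹ * (inc e (d k) * chainProd d (ext d k N) 0 k))
          conv_rhs => rw [hAeq]
          rw [Matrix.mul_assoc (inc (d k) e) Asq _, ← Matrix.mul_assoc Asq Asq⁻¹,
            Matrix.mul_nonsing_inv _ hunit, Matrix.one_mul, ← Matrix.mul_assoc,
            inc_mul_inc (by simp [hklast]), inc_self, Matrix.one_mul]
        have hψM : ψ Mt = p := by
          rw [hψ]
          apply Prod.ext_iff.mpr
          refine ⟨rfl, ?_⟩
          show Asq⁻¹ * (inc e (d k) * chainProd d (ext d k Mt) 0 k) = p.2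
          rw [hMprod, ← Matrix.mul_assoc (inc e (d k)), ← hAsq, ← Matrix.mul_assoc,
            Matrix.nonsing_inv_mul _ hunit, Matrix.one_mul]
        exact transfer_localmin _ _ ψ Mt hcont hFG (by rw [hψM]; exact hp)
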